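/- Let S > 0, T = 1, and K = -S. Then the eigenvalues of the Jacobian of the plant–soil system at the coexistence equilibrium Ē₃ = (S, S, 1, 1) are -S ± √(S(S-1)) and ±i√S; in particular there is a purely imaginary pair ±i√S, and the other two eigenvalues have negative real part. -/

import Mathlib

open Polynomial

/-- Jacobian of the plant-soil model with T = 1 evaluated at (B₁,B₂,T₁,T₂) = (S,S,1,1),
with K as a parameter (to be taken equal to -S), over ℂ. -/
noncomputable def JHopf (K S : ℝ) : Matrix (Fin 4) (Fin 4) ℂ :=
  !![1 - (S : ℂ) - 1 - (K : ℂ) * 1, -(S : ℂ), -(S : ℂ), -(K : ℂ) * S;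
     -(S : ℂ), 1 - (S : ℂ) - (K : ℂ) * 1 - 1, -(K : ℂ) * S, -(S : ℂ);
     1, 0, -(S : ℂ), 0;
     0, 1, 0, -(S : ℂ)]

set_option maxHeartbeats 1000000 in
theorem hopf_eigenvalues (K S : ℝ) (hS : 0 < S) (hK : K = -S) :
    let d : ℂ := ((S : ℂ) * ((S : ℂ) - 1)) ^ ((1 : ℂ) / 2)
    (JHopf K S).charpoly.roots =
      {-(S : ℂ) + d, -(S : ℂ) - d,
        Complex.I * (Real.sqrt S : ℂ), -(Complex.I * (Real.sqrt S : ℂ))} ∧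
    (Complex.I * (Real.sqrt S : ℂ)).re = 0 ∧
    (-(Complex.I * (Real.sqrt S : ℂ))).re = 0 ∧
    (Complex.I * (Real.sqrt S : ℂ)) ≠ 0 ∧
    (-(S : ℂ) + d).re < 0 ∧ (-(S : ℂ) - d).re < 0 := by
  intro d
  have hd_def : d = ((S : ℂ) * ((S : ℂ) - 1)) ^ ((1 : ℂ) / 2) := rfl
  set c : ℂ := Complex.I * (Real.sqrt S : ℂ) with hc_def
  -- key algebraic facts
  have hd2 : d * d = (S : ℂ) * ((S : ℂ) - 1) := by
    by_cases hz : (S : ℂ) * ((S : ℂ) - 1) = 0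
    · simp [hd_def, hz, Complex.zero_cpow (by norm_num : ((1:ℂ)/2) ≠ 0)]
    · have := (Complex.cpow_add ((1:ℂ)/2) ((1:ℂ)/2) hz).symm
      simpa [hd_def, Complex.cpow_one] using this.trans (by norm_num)
  have hsq : (Real.sqrt S : ℝ) * Real.sqrt S = S := Real.mul_self_sqrt hS.le
  have hc2 : c * c = -(S : ℂ) := by
    have h : ((Real.sqrt S : ℂ)) * ((Real.sqrt S : ℂ)) = (S : ℂ) := by
      rw [← Complex.ofReal_mul, hsq]
    calc c * c = (Complex.I * Complex.I) * ((Real.sqrt S : ℂ) * (Real.sqrt S : ℂ)) := by ring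
      _ = -(S : ℂ) := by rw [Complex.I_mul_I, h]; ring
  -- charpoly computation
  have hchar : (JHopf K S).charpoly = X^4 + C (2*(S:ℂ)) * X^3 + C (2*(S:ℂ)) * X^2
      + C (2*(S:ℂ)^2) * X + C ((S:ℂ)^2) := by
    have hJ : JHopf K S = !![0, -(S:ℂ), -(S:ℂ), (S:ℂ)^2;
        -(S:ℂ), 0, (S:ℂ)^2, -(S:ℂ); 1, 0, -(S:ℂ), 0; 0, 1, 0, -(S:ℂ)] := by
      refine Matrix.ext fun i j => ?_
      fin_cases i <;> fin_cases j <;> simp [JHopf, hK] <;> ring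
    have hM : (JHopf K S).charmatrix =
        !![X, C (S:ℂ), C (S:ℂ), -C ((S:ℂ)^2);
           C (S:ℂ), X, -C ((S:ℂ)^2), C (S:ℂ);
           -1, 0, X + C (S:ℂ), 0;
           0, -1, 0, X + C (S:ℂ)] := by
      rw [hJ]
      refine Matrix.ext fun i j => ?_
      fin_cases i <;> fin_cases j <;>
        simp [Matrix.charmatrix_apply, Matrix.one_apply]
    rw [Matrix.charpoly, hM]
    simp [Matrix.det_succ_row_zero, Fin.sum_univ_succ, Fin.succAbove, Fin.castSucc,
      Fin.castAdd, Fin.castLE]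
    all_goals ring_nf
    all_goals rw [show (C 2 : ℂ[X]) = 2 from map_ofNat C 2]
  -- factorization
  have hfac : (JHopf K S).charpoly =
      (({-(S:ℂ) + d, -(S:ℂ) - d, c, -c} : Multiset ℂ).map (fun r => X - C r)).prod := by
    rw [hchar]
    simp only [Multiset.insert_eq_cons, Multiset.map_cons, Multiset.map_singleton,
      Multiset.prod_cons, Multiset.prod_singleton]
    have hdC : C d * C d = C (S:ℂ) * C (S:ℂ) - C (S:ℂ) := by
      rw [← C_mul, ← C_mul, ← C_sub, hd2]; congr 1; ring
    have hcC : C c * C c = -C (S:ℂ) := by rw [← C_mul, hc2, C_neg]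
    simp only [map_add, map_sub, map_neg, map_mul, map_pow, C_neg, map_ofNat]
    linear_combination (X^2 + C (S:ℂ)) * hdC +
      (X^2 + 2 * C (S:ℂ) * X + C (S:ℂ) * C (S:ℂ) - C d * C d) * hcC
  have hroots : (JHopf K S).charpoly.roots = {-(S:ℂ) + d, -(S:ℂ) - d, c, -c} := by
    rw [hfac, Polynomial.roots_multiset_prod_X_sub_C]
  -- real part facts
  have hre : c.re = 0 := by simp [hc_def]
  have hsqrt_ne : Real.sqrt S ≠ 0 := (Real.sqrt_pos.mpr hS).ne'
  have hcne : c ≠ 0 := by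
    simp [hc_def, Complex.I_ne_zero, Complex.ofReal_ne_zero, hsqrt_ne]
  have hdre : |d.re| < S := by
    by_cases h1 : 1 ≤ S
    · have hz : (0:ℝ) ≤ S * (S - 1) := mul_nonneg hS.le (by linarith)
      have hz' : ((S:ℂ) * ((S:ℂ) - 1)) = ((S * (S-1) : ℝ) : ℂ) := by push_cast; ring
      have h12 : ((1:ℂ)/2) = (((1:ℝ)/2 : ℝ) : ℂ) := by norm_num
      have hdr : d = (((S*(S-1)) ^ ((1:ℝ)/2) : ℝ) : ℂ) := by
        rw [hd_def, hz', h12, Complex.ofReal_cpow hz]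
      rw [hdr, Complex.ofReal_re]
      have hrw : (S * (S - 1)) ^ ((1:ℝ)/2) = Real.sqrt (S * (S-1)) := by
        rw [Real.sqrt_eq_rpow]
      rw [hrw, abs_of_nonneg (Real.sqrt_nonneg _)]
      have hlt : S * (S - 1) < S ^ 2 := by nlinarith
      calc Real.sqrt (S * (S-1)) < Real.sqrt (S^2) := Real.sqrt_lt_sqrt hz hlt
        _ = S := Real.sqrt_sq hS.le
    · push_neg at h1
      have hzr : S * (S - 1) < 0 := mul_neg_of_pos_of_neg hS (by linarith)
      have hz' : ((S:ℂ) * ((S:ℂ) - 1)) = ((S * (S-1) : ℝ) : ℂ) := by push_cast; ring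
      have hzne : ((S * (S-1) : ℝ) : ℂ) ≠ 0 := Complex.ofReal_ne_zero.mpr hzr.ne
      have hde : d = Complex.exp (Complex.log ((S * (S-1) : ℝ) : ℂ) * ((1:ℂ)/2)) := by
        rw [hd_def, hz', Complex.cpow_def_of_ne_zero hzne]
      have hlim : (Complex.log ((S * (S-1) : ℝ) : ℂ)).im = Real.pi := by
        rw [Complex.log_im, Complex.arg_ofReal_of_neg hzr]
      have him : (Complex.log ((S * (S-1) : ℝ) : ℂ) * ((1:ℂ)/2)).im = Real.pi / 2 := by
        rw [Complex.mul_im, hlim]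
        norm_num
        ring
      have hre0 : d.re = 0 := by
        rw [hde, Complex.exp_re, him, Real.cos_pi_div_two, mul_zero]
      rw [hre0]; simpa using hS
  refine ⟨hroots, hre, by simpa using hre, hcne, ?_, ?_⟩
  · have h : (-(S : ℂ) + d).re = -S + d.re := by simp
    rw [h]
    have := abs_lt.mp hdre
    linarith [this.2]
  · have h : (-(S : ℂ) - d).re = -S - d.re := by simp
    rw [h]
    have := abs_lt.mp hdre
    linarith [this.1]
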